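/- Let f : [0,∞) → V be a bounded measurable function into a separable Banach space V such that for almost every t ∈ [0,1] the uniform Cesàro limit A_t = lim_{N-M→∞} (1/(N-M)) ∑_{n=M+1}^{N} f(t+n) exists (over integers 0 ≤ M < N). Then lim_{b-a→∞} (1/(b-a)) ∫_a^b f(x) dx exists (over reals 0 ≤ a < b) and equals ∫_0^1 A_t dt. -/

import Mathlib

set_option maxHeartbeats 1000000


open MeasureTheory Filter Topology

theorem stmt3 {V : Type*} [NormedAddCommGroup V] [NormedSpace ℝ V]
    [CompleteSpace V] [SecondCountableTopology V]
    (f : ℝ → V) (hmeas : StronglyMeasurable f)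
    (M : ℝ) (hbd : ∀ x, ‖f x‖ ≤ M)
    (A : ℝ → V)
    (hA : ∀ᵐ t ∂(volume.restrict (Set.Icc (0:ℝ) 1)),
      ∀ ε > (0:ℝ), ∃ L : ℕ, ∀ M₀ N : ℕ, M₀ < N → L < N - M₀ →
        ‖((N - M₀ : ℕ) : ℝ)⁻¹ • ∑ n ∈ Finset.Ioc M₀ N, f (t + n) - A t‖ < ε) :
    ∀ ε > (0:ℝ), ∃ L : ℝ, ∀ a b : ℝ, 0 ≤ a → a < b → L < b - a →
      ‖(b - a)⁻¹ • ∫ x in Set.Icc a b, f x - ∫ t in Set.Icc (0:ℝ) 1, A t‖ < ε := by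
  intro ε hε
  have hM0 : 0 ≤ M := le_trans (norm_nonneg _) (hbd 0)
  -- interval integrability
  have hInt : ∀ u v : ℝ, IntervalIntegrable f volume u v := by
    intro u v
    rw [intervalIntegrable_iff]
    have : IsFiniteMeasure (volume.restrict (Set.uIoc u v)) :=
      ⟨by rw [Measure.restrict_apply_univ]; exact measure_Ioc_lt_top⟩
    exact Integrable.mono' (integrable_const M) hmeas.aestronglyMeasurable
      (Filter.Eventually.of_forall hbd)
  have hFin : IsFiniteMeasure (volume.restrict (Set.Icc (0:ℝ) 1)) :=
    ⟨by simp [Real.volume_Icc]⟩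
  set φ : ℕ × ℕ → ℝ → V :=
    fun p t => ((p.2 - p.1 : ℕ) : ℝ)⁻¹ • ∑ n ∈ Finset.Ioc p.1 p.2, f (t + (n : ℝ)) with hφ
  set l : Filter (ℕ × ℕ) :=
    Filter.atTop.comap (fun p : ℕ × ℕ => p.2 - p.1) ⊓ 𝓟 {p : ℕ × ℕ | p.1 < p.2} with hl
  haveI hcg : l.IsCountablyGenerated := by rw [hl]; infer_instance
  -- pointwise bound
  have hφbd : ∀ p t, ‖φ p t‖ ≤ M := by
    intro p t
    have h1 : ‖∑ n ∈ Finset.Ioc p.1 p.2, f (t + (n : ℝ))‖ ≤ ((p.2 - p.1 : ℕ) : ℝ) * M := by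
      refine (norm_sum_le _ _).trans ?_
      have := Finset.sum_le_card_nsmul (Finset.Ioc p.1 p.2) (fun n => ‖f (t + (n : ℝ))‖) M
        (fun n _ => hbd _)
      simpa [Nat.card_Ioc, nsmul_eq_mul] using this
    calc ‖φ p t‖ = ((p.2 - p.1 : ℕ) : ℝ)⁻¹ * ‖∑ n ∈ Finset.Ioc p.1 p.2, f (t + (n : ℝ))‖ := by
          rw [hφ, norm_smul, Real.norm_eq_abs, abs_of_nonneg (by positivity)]
      _ ≤ ((p.2 - p.1 : ℕ) : ℝ)⁻¹ * (((p.2 - p.1 : ℕ) : ℝ) * M) := by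
          apply mul_le_mul_of_nonneg_left h1 (by positivity)
      _ = (((p.2 - p.1 : ℕ) : ℝ)⁻¹ * ((p.2 - p.1 : ℕ) : ℝ)) * M := by ring
      _ ≤ 1 * M := by
          apply mul_le_mul_of_nonneg_right _ hM0
          rcases eq_or_ne ((p.2 - p.1 : ℕ) : ℝ) 0 with h | h
          · simp [h]
          · rw [inv_mul_cancel₀ h]
      _ = M := one_mul M
  -- measurability
  have hφmeas : ∀ p : ℕ × ℕ, AEStronglyMeasurable (φ p) (volume.restrict (Set.Icc (0:ℝ) 1)) := by
    intro p
    have hs : StronglyMeasurable (fun t => ∑ n ∈ Finset.Ioc p.1 p.2, f (t + (n : ℝ))) :=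
      Finset.stronglyMeasurable_fun_sum _ fun n _ =>
        hmeas.comp_measurable (measurable_add_const _)
    exact (hs.const_smul _).aestronglyMeasurable
  -- a.e. norm bound on A
  have hAbd : ∀ᵐ t ∂(volume.restrict (Set.Icc (0:ℝ) 1)), ‖A t‖ ≤ M := by
    filter_upwards [hA] with t ht
    refine le_of_forall_pos_lt_add fun δ hδ => ?_
    obtain ⟨L, hL⟩ := ht δ hδ
    have h2 := hL 0 (L + 1) (by omega) (by omega)
    have h3 : ‖A t‖ ≤ ‖φ (0, L+1) t‖ + ‖φ (0, L+1) t - A t‖ := by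
      calc ‖A t‖ = ‖φ (0, L+1) t - (φ (0, L+1) t - A t)‖ := by rw [sub_sub_cancel]
        _ ≤ ‖φ (0, L+1) t‖ + ‖φ (0, L+1) t - A t‖ := norm_sub_le _ _
    calc ‖A t‖ ≤ ‖φ (0, L+1) t‖ + ‖φ (0, L+1) t - A t‖ := h3
      _ < M + δ := add_lt_add_of_le_of_lt (hφbd _ t) h2
  -- a.e. convergence along l
  have hlim : ∀ᵐ t ∂(volume.restrict (Set.Icc (0:ℝ) 1)),
      Tendsto (fun p => φ p t) l (𝓝 (A t)) := by
    filter_upwards [hA] with t ht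
    rw [Metric.tendsto_nhds]
    intro δ hδ
    obtain ⟨L, hL⟩ := ht δ hδ
    rw [hl, Filter.eventually_inf_principal, Filter.eventually_comap]
    filter_upwards [Filter.eventually_ge_atTop (L + 1)] with n hn p hp hplt
    rw [dist_eq_norm]
    exact hL p.1 p.2 hplt (by omega)
  -- dominated convergence
  have hDCT : Tendsto (fun p => ∫ t in Set.Icc (0:ℝ) 1, φ p t) l
      (𝓝 (∫ t in Set.Icc (0:ℝ) 1, A t)) :=
    tendsto_integral_filter_of_dominated_convergence (fun _ => M)
      (Filter.Eventually.of_forall hφmeas)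
      (Filter.Eventually.of_forall fun p => Filter.Eventually.of_forall fun t => hφbd p t)
      (integrable_const M) hlim
  obtain ⟨k, hk⟩ : ∃ k : ℕ, ∀ p : ℕ × ℕ, p.1 < p.2 → k ≤ p.2 - p.1 →
      ‖(∫ t in Set.Icc (0:ℝ) 1, φ p t) - ∫ t in Set.Icc (0:ℝ) 1, A t‖ < ε / 2 := by
    have h5 : ∀ᶠ p in l,
        ‖(∫ t in Set.Icc (0:ℝ) 1, φ p t) - ∫ t in Set.Icc (0:ℝ) 1, A t‖ < ε / 2 := by
      have := Metric.tendsto_nhds.mp hDCT (ε / 2) (by positivity)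
      filter_upwards [this] with p hp
      rwa [dist_eq_norm] at hp
    rw [hl, Filter.eventually_inf_principal, Filter.eventually_comap,
      Filter.eventually_atTop] at h5
    obtain ⟨k, hk⟩ := h5
    exact ⟨k, fun p h1 h2 => hk _ h2 p rfl h1⟩
  -- adjacent-interval sum
  have hsum : ∀ m j : ℕ, ∑ n ∈ Finset.Ioc m (m + j), (∫ x in (n:ℝ)..((n:ℝ)+1), f x)
      = ∫ x in ((m:ℝ)+1)..((m:ℝ)+1+(j:ℝ)), f x := by
    intro m j
    induction j with
    | zero => simp
    | succ j ih =>
      have he : m + (j + 1) = (m + j) + 1 := rfl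
      rw [he, Finset.sum_Ioc_succ_top (Nat.le_add_right m j), ih]
      have := intervalIntegral.integral_add_adjacent_intervals
        (hInt ((m:ℝ)+1) ((m:ℝ)+1+(j:ℝ))) (hInt ((m:ℝ)+1+(j:ℝ)) ((m:ℝ)+1+(j:ℝ)+1))
      push_cast
      rw [show (m:ℝ)+1+((j:ℝ)+1) = (m:ℝ)+1+(j:ℝ)+1 by ring, ← this]
      congr 2 <;> push_cast <;> ring
  -- the integral of φ p over [0,1]
  have hkey : ∀ p : ℕ × ℕ, (∫ t in Set.Icc (0:ℝ) 1, φ p t)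
      = ((p.2 - p.1 : ℕ) : ℝ)⁻¹ • ∫ x in ((p.1:ℝ)+1)..((p.1:ℝ)+1+((p.2 - p.1 : ℕ):ℝ)), f x := by
    intro p
    have hintn : ∀ n : ℕ, Integrable (fun t => f (t + (n : ℝ)))
        (volume.restrict (Set.Icc (0:ℝ) 1)) := fun n =>
      Integrable.mono' (integrable_const M)
        ((hmeas.comp_measurable (measurable_add_const _)).aestronglyMeasurable)
        (Filter.Eventually.of_forall fun t => hbd _)
    have h1 : (∫ t in Set.Icc (0:ℝ) 1, φ p t)
        = ((p.2 - p.1 : ℕ) : ℝ)⁻¹ • ∫ t in Set.Icc (0:ℝ) 1,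
            ∑ n ∈ Finset.Ioc p.1 p.2, f (t + (n : ℝ)) := integral_smul _ _
    rw [h1]
    congr 1
    rw [integral_finset_sum _ fun n _ => hintn n]
    have h2 : ∀ n ∈ Finset.Ioc p.1 p.2,
        (∫ t in Set.Icc (0:ℝ) 1, f (t + (n : ℝ))) = ∫ x in (n:ℝ)..((n:ℝ)+1), f x := by
      intro n _
      rw [integral_Icc_eq_integral_Ioc, ← intervalIntegral.integral_of_le (zero_le_one),
        intervalIntegral.integral_comp_add_right]
      norm_num [add_comm]
    rw [Finset.sum_congr rfl h2]
    rcases le_or_gt p.1 p.2 with hple | hplt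
    · obtain ⟨j, hj⟩ : ∃ j, p.2 = p.1 + j := ⟨p.2 - p.1, by omega⟩
      rw [hj, hsum p.1 j, Nat.add_sub_cancel_left]
    · rw [Finset.Ioc_eq_empty (by omega), Finset.sum_empty]
      rw [show (p.2 - p.1 : ℕ) = 0 by omega]
      simp
  -- choose L
  refine ⟨max ((k:ℝ) + 4) (12 * (M + 1) / ε + 4), fun a b ha hab hL => ?_⟩
  have hba0 : (0:ℝ) < b - a := by linarith
  have hLk : (k:ℝ) + 4 < b - a := lt_of_le_of_lt (le_max_left _ _) hL
  have hLM : 12 * (M + 1) / ε + 4 < b - a := lt_of_le_of_lt (le_max_right _ _) hL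
  have hMdiv : 0 ≤ 12 * (M + 1) / ε := by positivity
  have hba4 : (4:ℝ) < b - a := by linarith
  set M₀ : ℕ := ⌈a⌉₊ with hM₀
  set N : ℕ := ⌊b - 1⌋₊ with hN
  have hM₀a : a ≤ (M₀:ℝ) := Nat.le_ceil a
  have hM₀a1 : (M₀:ℝ) < a + 1 := Nat.ceil_lt_add_one ha
  have hNb : (N:ℝ) ≤ b - 1 := Nat.floor_le (by linarith)
  have hNb1 : b - 1 < (N:ℝ) + 1 := Nat.lt_floor_add_one (b - 1)
  have hMN : M₀ < N := by
    have : (M₀:ℝ) < (N:ℝ) := by linarith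
    exact_mod_cast this
  have hgcast : ((N - M₀ : ℕ) : ℝ) = (N:ℝ) - (M₀:ℝ) := by
    push_cast [Nat.cast_sub hMN.le]; ring
  have hgpos : (0:ℝ) < ((N - M₀ : ℕ) : ℝ) := by rw [hgcast]; linarith
  have hgk : k ≤ N - M₀ := by
    have : (k:ℝ) < ((N - M₀ : ℕ) : ℝ) := by rw [hgcast]; linarith
    exact_mod_cast this.le
  have hgle : ((N - M₀ : ℕ) : ℝ) ≤ b - a := by rw [hgcast]; linarith
  have hgge : b - a - 3 < ((N - M₀ : ℕ) : ℝ) := by rw [hgcast]; linarith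
  set c : ℝ := (M₀:ℝ) + 1 with hc
  set d : ℝ := (N:ℝ) + 1 with hd
  have hac : a < c := by rw [hc]; linarith
  have hca : c ≤ a + 2 := by rw [hc]; linarith
  have hdb : d ≤ b := by rw [hd]; linarith
  have hbd' : b - 1 < d := by rw [hd]; linarith
  -- decompose the integral
  have hIab : (∫ x in Set.Icc a b, f x)
      = (∫ x in a..c, f x) + ((∫ x in c..d, f x) + ∫ x in d..b, f x) := by
    have h7 := intervalIntegral.integral_add_adjacent_intervals (hInt a c) (hInt c b)
    have h8 := intervalIntegral.integral_add_adjacent_intervals (hInt c d) (hInt d b)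
    rw [integral_Icc_eq_integral_Ioc, ← intervalIntegral.integral_of_le hab.le, ← h7, ← h8]
  set I₁ : V := ∫ x in a..c, f x with hI₁d
  set J : V := ∫ x in c..d, f x with hJd
  set I₃ : V := ∫ x in d..b, f x with hI₃d
  set K : V := ∫ t in Set.Icc (0:ℝ) 1, A t with hK
  have hΦ : ‖((N - M₀ : ℕ) : ℝ)⁻¹ • J - K‖ < ε / 2 := by
    have := hk (M₀, N) hMN hgk
    rw [hkey (M₀, N)] at this
    have hcd2 : ((M₀:ℝ) + 1 + (((M₀, N).2 - (M₀, N).1 : ℕ):ℝ)) = d := by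
      simp only []
      rw [hgcast, hd]; ring
    simpa [hJd, hc, hcd2] using this
  set g : ℝ := ((N - M₀ : ℕ) : ℝ) with hg
  have hgne : g ≠ 0 := ne_of_gt hgpos
  have hbane : b - a ≠ 0 := ne_of_gt hba0
  -- algebraic identity
  have hid : (b - a)⁻¹ • ((I₁ + (J + I₃))) - K
      = (b - a)⁻¹ • I₁ + (b - a)⁻¹ • I₃ + (g / (b - a)) • (g⁻¹ • J - K)
        + ((g / (b - a)) - 1) • K := by
    match_scalars <;> field_simp <;> ring
  -- bounds
  have hnI₁ : ‖I₁‖ ≤ M * 2 := by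
    have := intervalIntegral.norm_integral_le_of_norm_le_const
      (C := M) (f := f) (a := a) (b := c) (fun x _ => hbd x)
    calc ‖I₁‖ ≤ M * |c - a| := this
      _ ≤ M * 2 := by
          apply mul_le_mul_of_nonneg_left _ hM0
          rw [abs_of_nonneg (by linarith)]; linarith
  have hnI₃ : ‖I₃‖ ≤ M * 1 := by
    have := intervalIntegral.norm_integral_le_of_norm_le_const
      (C := M) (f := f) (a := d) (b := b) (fun x _ => hbd x)
    calc ‖I₃‖ ≤ M * |b - d| := this
      _ ≤ M * 1 := by
          apply mul_le_mul_of_nonneg_left _ hM0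
          rw [abs_of_nonneg (by linarith)]; linarith
  have hnK : ‖K‖ ≤ M := by
    have := norm_integral_le_of_norm_le_const (μ := volume.restrict (Set.Icc (0:ℝ) 1)) hAbd
    simpa [Real.volume_Icc, hK] using this
  have hr1 : g / (b - a) ≤ 1 := by
    rw [div_le_one hba0]; exact hgle
  have hr1' : 0 ≤ g / (b - a) := by positivity
  have hr2 : |g / (b - a) - 1| ≤ 3 / (b - a) := by
    rw [abs_of_nonpos (by linarith), neg_sub]
    have he : 1 - g / (b - a) = (b - a - g) / (b - a) := by field_simp
    rw [he]
    gcongr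
    linarith
  have h6 : (b - a)⁻¹ * (M * 2) + (b - a)⁻¹ * (M * 1) + 3 / (b - a) * M ≤ ε / 2 := by
    have h13 : 12 * (M + 1) / ε < b - a := by linarith
    rw [div_lt_iff₀ hε] at h13
    have hinv : (b - a)⁻¹ * (M * 2) + (b - a)⁻¹ * (M * 1) + 3 / (b - a) * M
        = 6 * M / (b - a) := by
      field_simp
      ring
    rw [hinv, div_le_div_iff₀ hba0 (by norm_num : (0:ℝ) < 2)]
    calc 6 * M * 2 ≤ 12 * (M + 1) := by linarith
      _ ≤ (b - a) * ε := h13.le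
      _ = ε * (b - a) := mul_comm _ _
  -- final estimate
  have hfab : Integrable f (volume.restrict (Set.Icc a b)) := by
    have : IsFiniteMeasure (volume.restrict (Set.Icc a b)) := by
      refine ⟨?_⟩
      rw [Measure.restrict_apply_univ, Real.volume_Icc]
      exact ENNReal.ofReal_lt_top
    exact Integrable.mono' (integrable_const M) hmeas.aestronglyMeasurable
      (Filter.Eventually.of_forall hbd)
  have hsplit : (∫ x in Set.Icc a b, (f x - K)) = (∫ x in Set.Icc a b, f x) - (b - a) • K := by
    rw [integral_sub hfab (integrable_const K), integral_const]
    congr 1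
    rw [measureReal_def, Measure.restrict_apply_univ, Real.volume_Icc,
      ENNReal.toReal_ofReal (by linarith : (0:ℝ) ≤ b - a)]
  show ‖(b - a)⁻¹ • ∫ x in Set.Icc a b, (f x - K)‖ < ε
  rw [hsplit, smul_sub, smul_smul, inv_mul_cancel₀ hbane, one_smul, hIab, hid]
  have hinvpos : (0:ℝ) < (b - a)⁻¹ := inv_pos.mpr hba0
  have hb1 : ‖(b - a)⁻¹ • I₁‖ ≤ (b - a)⁻¹ * (M * 2) := by
    rw [norm_smul, Real.norm_eq_abs, abs_of_pos hinvpos]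
    exact mul_le_mul_of_nonneg_left hnI₁ hinvpos.le
  have hb2 : ‖(b - a)⁻¹ • I₃‖ ≤ (b - a)⁻¹ * (M * 1) := by
    rw [norm_smul, Real.norm_eq_abs, abs_of_pos hinvpos]
    exact mul_le_mul_of_nonneg_left hnI₃ hinvpos.le
  have hb3 : ‖(g / (b - a)) • (g⁻¹ • J - K)‖ ≤ 1 * ‖g⁻¹ • J - K‖ := by
    rw [norm_smul, Real.norm_eq_abs, abs_of_nonneg hr1']
    exact mul_le_mul_of_nonneg_right hr1 (norm_nonneg _)
  have hb4 : ‖((g / (b - a)) - 1) • K‖ ≤ 3 / (b - a) * M := by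
    rw [norm_smul, Real.norm_eq_abs]
    exact mul_le_mul hr2 hnK (norm_nonneg _) (by positivity)
  have hn4 : ‖(b - a)⁻¹ • I₁ + (b - a)⁻¹ • I₃ + (g / (b - a)) • (g⁻¹ • J - K)
        + ((g / (b - a)) - 1) • K‖
      ≤ ‖(b - a)⁻¹ • I₁‖ + ‖(b - a)⁻¹ • I₃‖ + ‖(g / (b - a)) • (g⁻¹ • J - K)‖
        + ‖((g / (b - a)) - 1) • K‖ :=
    (norm_add_le _ _).trans (add_le_add_left ((norm_add_le _ _).trans
      (add_le_add_left (norm_add_le _ _) _)) _)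
  refine lt_of_le_of_lt (hn4.trans
    (add_le_add (add_le_add (add_le_add hb1 hb2) hb3) hb4)) ?_
  rw [one_mul]
  linarith [h6, hΦ]
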